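/- Let N ≥ 2 be an integer and for 0 ≤ m ≤ N−1 set a_m = ∏_{j=1}^{m} 4·sin²(πj/N) (with a_0 = 1). Then for 0 ≤ m ≤ N−2 one has a_{m+1} ≥ a_m if and only if sin(π(m+1)/N) ≥ 1/2, i.e., if and only if N/6 ≤ m+1 ≤ 5N/6. Consequently the maximum of a_m over 0 ≤ m ≤ N−1 is attained at m = ⌊5N/6⌋. -/

import Mathlib

open Real Finset

/-- `sin(πx) ≥ 1/2` iff `1/6 ≤ x ≤ 5/6`, for `0 < x < 1`. -/
lemma sin_half_iff_aux {x : ℝ} (h0 : 0 < x) (h1 : x < 1) :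
    1 / 2 ≤ Real.sin (Real.pi * x) ↔ 1 / 6 ≤ x ∧ x ≤ 5 / 6 := by
  have hpi := Real.pi_pos
  have hmono := Real.strictMonoOn_sin
  have h6 : Real.sin (Real.pi / 6) = 1 / 2 := Real.sin_pi_div_six
  constructor
  · intro h
    constructor
    · by_contra hc
      push_neg at hc
      have hlt : Real.sin (Real.pi * x) < Real.sin (Real.pi / 6) := by
        apply hmono
        · constructor <;> nlinarith
        · constructor <;> nlinarith
        · nlinarith
      rw [h6] at hlt; linarith
    · by_contra hc
      push_neg at hc
      have hrw : Real.sin (Real.pi * x) = Real.sin (Real.pi - Real.pi * x) :=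
        (Real.sin_pi_sub _).symm
      have hlt : Real.sin (Real.pi - Real.pi * x) < Real.sin (Real.pi / 6) := by
        apply hmono
        · constructor <;> nlinarith
        · constructor <;> nlinarith
        · nlinarith
      rw [h6] at hlt; linarith
  · rintro ⟨ha, hb⟩
    rcases le_or_gt x (1 / 2) with hx | hx
    · have hle : Real.sin (Real.pi / 6) ≤ Real.sin (Real.pi * x) := by
        apply hmono.monotoneOn
        · constructor <;> nlinarith
        · constructor <;> nlinarith
        · nlinarith
      linarith [h6 ▸ hle]
    · have hrw : Real.sin (Real.pi * x) = Real.sin (Real.pi - Real.pi * x) :=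
        (Real.sin_pi_sub _).symm
      have hle : Real.sin (Real.pi / 6) ≤ Real.sin (Real.pi - Real.pi * x) := by
        apply hmono.monotoneOn
        · constructor <;> nlinarith
        · constructor <;> nlinarith
        · nlinarith
      rw [hrw]; linarith [h6 ▸ hle]

lemma abs_one_sub_exp_sq (θ : ℝ) :
    ‖1 - Complex.exp (θ * Complex.I)‖ ^ 2 = 4 * Real.sin (θ / 2) ^ 2 := by
  rw [Complex.sq_norm, Complex.normSq_apply]
  simp only [Complex.sub_re, Complex.sub_im, Complex.one_re, Complex.one_im,
    Complex.exp_ofReal_mul_I_re, Complex.exp_ofReal_mul_I_im]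
  have h1 := Real.sin_sq_add_cos_sq θ
  have h2 := Real.cos_two_mul (θ / 2)
  have h3 := Real.sin_sq_add_cos_sq (θ / 2)
  have hθ : 2 * (θ / 2) = θ := by ring
  rw [hθ] at h2
  nlinarith

/-- The key identity: `∏_{j=1}^{N-1} 4 sin²(πj/N) = N²`. -/
lemma prod_four_sin_sq (N : ℕ) (hN : 2 ≤ N) :
    ∏ j ∈ Finset.Icc 1 (N - 1), (4 * Real.sin (Real.pi * j / N) ^ 2) = (N : ℝ) ^ 2 := by
  obtain ⟨n, rfl⟩ : ∃ n, N = n + 1 := ⟨N - 1, by omega⟩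
  have hμ := Complex.isPrimitiveRoot_exp (n + 1) (by omega)
  have h := hμ.prod_one_sub_pow_eq_order
  push_cast at h
  have h2 : (‖∏ k ∈ range n, (1 - Complex.exp (2 * Real.pi * Complex.I / (n + 1)) ^ (k + 1))‖) ^ 2
      = ‖(n : ℂ) + 1‖ ^ 2 := by rw [h]
  rw [norm_prod] at h2
  have hrhs : ‖(n : ℂ) + 1‖ = (n : ℝ) + 1 := by
    rw [show ((n : ℂ) + 1) = (((n : ℝ) + 1 : ℝ) : ℂ) by push_cast; ring, Complex.norm_real, Real.norm_eq_abs]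
    rw [abs_of_nonneg (by positivity)]
  rw [hrhs, ← Finset.prod_pow] at h2
  have hterm : ∀ k : ℕ,
      ‖1 - Complex.exp (2 * Real.pi * Complex.I / (n + 1)) ^ (k + 1)‖ ^ 2
        = 4 * Real.sin (Real.pi * (k + 1) / (n + 1)) ^ 2 := by
    intro k
    have hexp : Complex.exp (2 * Real.pi * Complex.I / (n + 1)) ^ (k + 1)
        = Complex.exp (((2 * Real.pi * (k + 1) / (n + 1) : ℝ) : ℂ) * Complex.I) := by
      rw [← Complex.exp_nat_mul]
      congr 1
      push_cast
      have hne : ((n : ℂ) + 1) ≠ 0 := by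
        have : ((n + 1 : ℕ) : ℂ) ≠ 0 := Nat.cast_ne_zero.mpr (by omega)
        push_cast at this
        exact this
      field_simp
    rw [hexp, abs_one_sub_exp_sq]
    congr 2
    push_cast
    ring
  have hre : ∏ j ∈ Finset.Icc 1 n, (4 * Real.sin (Real.pi * j / ((n : ℝ) + 1)) ^ 2)
      = ∏ k ∈ range n, (4 * Real.sin (Real.pi * ((k : ℝ) + 1) / ((n : ℝ) + 1)) ^ 2) := by
    rw [← Finset.Ico_add_one_right_eq_Icc, Finset.prod_Ico_eq_prod_range]
    apply Finset.prod_congr (by simp)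
    intro k _
    push_cast
    ring_nf
  push_cast
  rw [hre]
  rw [Finset.prod_congr rfl (fun k _ => (hterm k).symm), h2]

set_option maxHeartbeats 800000 in
theorem stmt2 (N : ℕ) (hN : 2 ≤ N) (a : ℕ → ℝ)
    (ha : ∀ m, a m = ∏ j ∈ Finset.Icc 1 m, 4 * Real.sin (Real.pi * j / N) ^ 2) :
    (∀ m : ℕ, m ≤ N - 2 →
      ((a m ≤ a (m + 1) ↔ 1 / 2 ≤ Real.sin (Real.pi * (m + 1) / N)) ∧
       (1 / 2 ≤ Real.sin (Real.pi * (m + 1) / N) ↔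
          (N : ℝ) / 6 ≤ (m : ℝ) + 1 ∧ (m : ℝ) + 1 ≤ 5 * (N : ℝ) / 6))) ∧
    (∀ m : ℕ, m ≤ N - 1 → a m ≤ a ((5 * N) / 6)) := by
  have hNR : (0 : ℝ) < N := by
    have : 0 < N := by omega
    exact_mod_cast this
  have hpi := Real.pi_pos
  -- positivity of sin factors
  have hsin_pos : ∀ j : ℕ, 1 ≤ j → j ≤ N - 1 → 0 < Real.sin (Real.pi * j / N) := by
    intro j h1 h2
    apply Real.sin_pos_of_pos_of_lt_pi
    · have : (1 : ℝ) ≤ j := by exact_mod_cast h1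
      positivity
    · have hjN : (j : ℝ) < N := by exact_mod_cast (by omega : j < N)
      rw [div_lt_iff₀ hNR]
      nlinarith
  have hfac_pos : ∀ j : ℕ, 1 ≤ j → j ≤ N - 1 → 0 < 4 * Real.sin (Real.pi * j / N) ^ 2 := by
    intro j h1 h2
    have := hsin_pos j h1 h2
    positivity
  have hapos : ∀ m : ℕ, m ≤ N - 1 → 0 < a m := by
    intro m hm
    rw [ha]
    apply Finset.prod_pos
    intro j hj
    rw [Finset.mem_Icc] at hj
    exact hfac_pos j hj.1 (by omega)
  have hstep : ∀ m : ℕ, a (m + 1) = a m * (4 * Real.sin (Real.pi * (m + 1 : ℕ) / N) ^ 2) := by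
    intro m
    rw [ha, ha, Finset.prod_Icc_succ_top (by omega : 1 ≤ m + 1)]
  -- sin bound lemma specialized
  have hsin_iff : ∀ m : ℕ, m + 1 ≤ N - 1 →
      (1 / 2 ≤ Real.sin (Real.pi * ((m : ℝ) + 1) / N) ↔
        (N : ℝ) / 6 ≤ (m : ℝ) + 1 ∧ (m : ℝ) + 1 ≤ 5 * (N : ℝ) / 6) := by
    intro m hm
    set x : ℝ := ((m : ℝ) + 1) / N with hx
    have hx0 : 0 < x := by positivity
    have hx1 : x < 1 := by
      rw [hx, div_lt_one hNR]
      exact_mod_cast (by omega : m + 1 < N)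
    have harg : Real.pi * ((m : ℝ) + 1) / N = Real.pi * x := by
      rw [hx]; ring
    rw [harg, sin_half_iff_aux hx0 hx1, hx]
    constructor
    · rintro ⟨h1, h2⟩
      constructor
      · rw [div_le_div_iff₀ (by norm_num) hNR] at h1; linarith
      · rw [div_le_div_iff₀ hNR (by norm_num)] at h2; linarith
    · rintro ⟨h1, h2⟩
      constructor
      · rw [div_le_div_iff₀ (by norm_num) hNR]; linarith
      · rw [div_le_div_iff₀ hNR (by norm_num)]; linarith
  -- step monotonicity
  have hup : ∀ k : ℕ, N ≤ 6 * (k + 1) → 6 * (k + 1) ≤ 5 * N → k + 1 ≤ N - 1 →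
      a k ≤ a (k + 1) := by
    intro k h1 h2 h3
    have hs : 1 / 2 ≤ Real.sin (Real.pi * ((k : ℝ) + 1) / N) := by
      rw [hsin_iff k h3]
      constructor
      · rw [div_le_iff₀ (by norm_num : (0:ℝ) < 6)]
        exact_mod_cast (by push_cast; exact_mod_cast (by omega : N ≤ (k + 1) * 6) : (N : ℝ) ≤ ((k:ℝ)+1) * 6)
      · rw [le_div_iff₀ (by norm_num : (0:ℝ) < 6)]
        exact_mod_cast (by omega : (k + 1) * 6 ≤ 5 * N)
    have hpos := hapos k (by omega)
    rw [hstep k]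
    have hc : (1 : ℝ) ≤ 4 * Real.sin (Real.pi * (k + 1 : ℕ) / N) ^ 2 := by
      push_cast
      nlinarith
    nlinarith
  have hdown : ∀ k : ℕ, 5 * N < 6 * (k + 1) → k + 1 ≤ N - 1 → a (k + 1) ≤ a k := by
    intro k h1 h3
    have hs : Real.sin (Real.pi * ((k : ℝ) + 1) / N) ≤ 1 / 2 := by
      by_contra hc
      push_neg at hc
      have := (hsin_iff k h3).mp hc.le
      have h2 := this.2
      rw [le_div_iff₀ (by norm_num : (0:ℝ) < 6)] at h2
      have : ((k : ℝ) + 1) * 6 ≤ 5 * N := h2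
      have : (k + 1) * 6 ≤ 5 * N := by exact_mod_cast this
      omega
    have hs0 : 0 < Real.sin (Real.pi * ((k : ℝ) + 1) / N) := by
      have := hsin_pos (k + 1) (by omega) h3
      push_cast at this
      exact this
    have hpos := hapos k (by omega)
    rw [hstep k]
    have hc : 4 * Real.sin (Real.pi * (k + 1 : ℕ) / N) ^ 2 ≤ 1 := by
      push_cast
      nlinarith
    have hc0 : 0 ≤ 4 * Real.sin (Real.pi * (k + 1 : ℕ) / N) ^ 2 := by positivity
    nlinarith
  set M := 5 * N / 6 with hMdef
  have hM6 : 6 * M ≤ 5 * N := by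
    have := Nat.div_mul_le_self (5 * N) 6
    omega
  have hM6' : 5 * N < 6 * (M + 1) := by
    have h1 := Nat.div_add_mod (5 * N) 6
    have h2 : 5 * N % 6 < 6 := Nat.mod_lt _ (by norm_num)
    omega
  have hM1 : M ≤ N - 1 := by
    have : 5 * N < 6 * N := by omega
    have := Nat.div_lt_of_lt_mul (by omega : 5 * N < 6 * N)
    omega
  -- chains
  have hchain_down : ∀ d : ℕ, M + d ≤ N - 1 → a (M + d) ≤ a M := by
    intro d
    induction d with
    | zero => intro _; simp
    | succ d ih =>
      intro hd
      have h1 : a (M + d + 1) ≤ a (M + d) := by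
        apply hdown
        · omega
        · omega
      have := ih (by omega)
      calc a (M + (d + 1)) = a (M + d + 1) := by ring_nf
        _ ≤ a (M + d) := h1
        _ ≤ a M := this
  have hchain_up : ∀ m : ℕ, N ≤ 6 * (m + 1) → ∀ d : ℕ, m + d ≤ M → a m ≤ a (m + d) := by
    intro m hm d
    induction d with
    | zero => intro _; simp
    | succ d ih =>
      intro hd
      have ih' := ih (by omega)
      have h1 : a (m + d) ≤ a (m + d + 1) := by
        apply hup
        · omega
        · omega
        · omega
      calc a m ≤ a (m + d) := ih'
        _ ≤ a (m + d + 1) := h1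
        _ = a (m + (d + 1)) := by ring_nf
  have hsmall : ∀ m : ℕ, 6 * (m + 1) < N → a m ≤ 1 := by
    intro m hm
    rw [ha]
    apply Finset.prod_le_one
    · intro j hj
      rw [Finset.mem_Icc] at hj
      have := hfac_pos j hj.1 (by omega)
      linarith
    · intro j hj
      rw [Finset.mem_Icc] at hj
      have hs : Real.sin (Real.pi * j / N) ≤ 1 / 2 := by
        have hlt : Real.pi * j / N < Real.pi / 6 := by
          rw [div_lt_div_iff₀ hNR (by norm_num : (0:ℝ) < 6)]
          have : (6 * j : ℝ) < N := by exact_mod_cast (by omega : 6 * j < N)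
          nlinarith
        have h0 : 0 < Real.sin (Real.pi * j / N) := hsin_pos j hj.1 (by omega)
        have hjpos : (1:ℝ) ≤ j := by exact_mod_cast hj.1
        have harg0 : 0 ≤ Real.pi * j / N := by positivity
        have hmem1 : Real.pi * j / N ∈ Set.Icc (-(Real.pi/2)) (Real.pi/2) := by
          constructor <;> nlinarith
        have hmem2 : Real.pi / 6 ∈ Set.Icc (-(Real.pi/2)) (Real.pi/2) := by
          constructor <;> nlinarith
        have := Real.strictMonoOn_sin hmem1 hmem2 hlt
        rw [Real.sin_pi_div_six] at this
        linarith
      have h0 : 0 < Real.sin (Real.pi * j / N) := hsin_pos j hj.1 (by omega)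
      nlinarith
  have hbig : (1 : ℝ) ≤ a M := by
    have hid : a (N - 1) = (N : ℝ) ^ 2 := by
      rw [ha]
      exact prod_four_sin_sq N hN
    have h1 : a (N - 1) ≤ a M := by
      have := hchain_down (N - 1 - M) (by omega)
      have heq : M + (N - 1 - M) = N - 1 := by omega
      rwa [heq] at this
    have hN2 : (1 : ℝ) ≤ (N : ℝ) ^ 2 := by
      have h2 : (2 : ℝ) ≤ N := by exact_mod_cast hN
      nlinarith
    linarith [hid ▸ h1]
  constructor
  · intro m hm
    have hm1 : m + 1 ≤ N - 1 := by omega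
    constructor
    · have hpos := hapos m (by omega)
      rw [hstep m]
      have hs0 : 0 < Real.sin (Real.pi * ((m : ℝ) + 1) / N) := by
        have := hsin_pos (m + 1) (by omega) hm1
        push_cast at this
        exact this
      push_cast
      constructor
      · intro h
        have h1 : (1 : ℝ) ≤ 4 * Real.sin (Real.pi * ((m : ℝ) + 1) / N) ^ 2 :=
          le_of_mul_le_mul_left (by linarith) hpos
        nlinarith
      · intro h
        have h1 : (1 : ℝ) ≤ 4 * Real.sin (Real.pi * ((m : ℝ) + 1) / N) ^ 2 := by nlinarith
        nlinarith [mul_le_mul_of_nonneg_left h1 hpos.le]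
    · exact hsin_iff m hm1
  · intro m hm
    rcases le_or_gt m M with hmM | hmM
    · rcases le_or_gt N (6 * (m + 1)) with hc | hc
      · have := hchain_up m hc (M - m) (by omega)
        have heq : m + (M - m) = M := by omega
        rwa [heq] at this
      · have h1 := hsmall m hc
        linarith
    · have := hchain_down (m - M) (by omega)
      have heq : M + (m - M) = m := by omega
      rwa [heq] at this
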